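/- arXiv:1001.0622 — 3 statements merged into one kernel-verified Lean document; each statement's English description precedes it below -/
import Mathlib

section
/- The product ⊙ has no zero divisors: for A ∈ M(p,p';F) and B ∈ M(q,q';F), one has A⊙B = 0 if and only if A = 0 or B = 0. -/
open scoped BigOperators ENNReal

noncomputable section

/-- The degree `|α|` of a multi-index `α ∈ ℕ^n`. -/
def mdeg {n : ℕ} (α : Fin n → ℕ) : ℕ := ∑ i, α i

/-- The factorial `α! = α₁! ⋯ αₙ!` of a multi-index. -/
def mfact {n : ℕ} (α : Fin n → ℕ) : ℕ := ∏ i, (α i).factorial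

/-- The multi-indices in `ℕ^n` of degree `p`. -/
abbrev MIdx (n p : ℕ) := {α : Fin n → ℕ // mdeg α = p}

instance (n p : ℕ) : Fintype (MIdx n p) :=
  Fintype.subtype (Finset.Nat.antidiagonalTuple n p) (fun α => by
    simp [Finset.Nat.mem_antidiagonalTuple, mdeg])

/-- The space `M(p,p';F)` of matrices with rows indexed by degree-`p` multi-indices in `ℕ^n`
and columns indexed by degree-`p'` multi-indices in `ℕ^n'`. -/
abbrev MMat (n n' p p' : ℕ) (F : Type*) := MIdx n p → MIdx n' p' → F

lemma mdeg_sub {n p q : ℕ} (α : MIdx n (p + q)) (β : MIdx n p) (h : ∀ i, β.1 i ≤ α.1 i) :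
    mdeg (α.1 - β.1) = q := by
  have h1 : mdeg (α.1 - β.1) + mdeg β.1 = mdeg α.1 := by
    simp only [mdeg, ← Finset.sum_add_distrib]
    exact Finset.sum_congr rfl fun i _ => Nat.sub_add_cancel (h i)
  have h2 := α.2
  have h3 := β.2
  omega

/-- The product `⊙` of `A ∈ M(p,p';F)` and `B ∈ M(q,q';F)`:
`(A⊙B)_{α,α'} = Σ_{β≤α, β'≤α', |β|=p, |β'|=p'} (α!/(β!(α−β)!)) A_{β,β'} B_{α−β,α'−β'}`. -/
def oprod {n n' p p' q q' : ℕ} {F : Type*} [RCLike F]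
    (A : MMat n n' p p' F) (B : MMat n n' q q' F) : MMat n n' (p + q) (p' + q') F :=
  fun α α' =>
    ∑ β : MIdx n p, ∑ β' : MIdx n' p',
      if h : (∀ i, β.1 i ≤ α.1 i) ∧ (∀ j, β'.1 j ≤ α'.1 j) then
        ((mfact α.1 : F) / ((mfact β.1 : F) * (mfact (α.1 - β.1) : F))) * A β β' *
          B ⟨α.1 - β.1, mdeg_sub α β h.1⟩ ⟨α'.1 - β'.1, mdeg_sub α' β' h.2⟩
      else 0

/-- Change the degree parameter of a multi-index along an equality of natural numbers. -/
def recast {n a b : ℕ} (h : a = b) (α : MIdx n a) : MIdx n b := ⟨α.1, h ▸ α.2⟩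

/-- The ordinary matrix product. -/
def mmul {n n' p q q' : ℕ} {F : Type*} [RCLike F]
    (A : MMat n n p q F) (B : MMat n n' q q' F) : MMat n n' p q' F :=
  fun α α' => ∑ β : MIdx n q, A α β * B β α'

/-- The `m`-th `⊙`-power of a row `h ∈ M(0,1;F)`. -/
def opowRow {n : ℕ} {F : Type*} [RCLike F] (h : MMat n n 0 1 F) : (m : ℕ) → MMat n n 0 m F
  | 0 => fun _ _ => 1
  | m + 1 => fun z α => oprod h (opowRow h m) z (recast (Nat.add_comm m 1) α)

/-- The `m`-th `⊙`-power of a column `v ∈ M(1,0;F)`. -/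
def opowCol {n : ℕ} {F : Type*} [RCLike F] (v : MMat n n 1 0 F) : (m : ℕ) → MMat n n m 0 F
  | 0 => fun _ _ => 1
  | m + 1 => fun α z => oprod v (opowCol v m) (recast (Nat.add_comm m 1) α) z

/-- The `⊙`-product `h¹ ⊙ h² ⊙ ⋯ ⊙ hᵐ` of a family of rows `hⁱ ∈ M(0,1;F)`. -/
def oprodRowFamily {n : ℕ} {F : Type*} [RCLike F] :
    (m : ℕ) → (Fin m → MMat n n 0 1 F) → MMat n n 0 m F
  | 0, _ => fun _ _ => 1
  | m + 1, hs => fun z α =>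
      oprod (hs 0) (oprodRowFamily m fun i => hs i.succ) z (recast (Nat.add_comm m 1) α)

/-- The row vector `(h₁,…,hₙ) ∈ M(0,1;F)` determined by `h : Fin n → F`; its entry at the
degree-one column index `α'` is `h^{α'}`. -/
def rowOf {n : ℕ} {F : Type*} [RCLike F] (h : Fin n → F) : MMat n n 0 1 F :=
  fun _ α' => ∏ i, h i ^ α'.1 i

/-- The column vector `(v₁,…,vₙ) ∈ M(1,0;F)` determined by `v : Fin n → F`. -/
def colOf {n : ℕ} {F : Type*} [RCLike F] (v : Fin n → F) : MMat n n 1 0 F :=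
  fun α _ => ∏ i, v i ^ α.1 i

/-- The unit matrix `E_k ∈ M_{n,n}(k,k;F)`. -/
def unitMat (n k : ℕ) (F : Type*) [RCLike F] : MMat n n k k F :=
  fun α β => if α = β then 1 else 0

/-- The `ρ`-norm `‖A‖_ρ = (Σ_{α,α'} |A_{α,α'}|^ρ/(α!(p!p'!)^{ρ−1}))^{1/ρ}` on `M(p,p';F)`. -/
def rnorm {n n' p p' : ℕ} {F : Type*} [RCLike F] (ρ : ℝ) (A : MMat n n' p p' F) : ℝ :=
  (∑ α : MIdx n p, ∑ α' : MIdx n' p',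
      ‖A α α'‖ ^ ρ /
        ((mfact α.1 : ℝ) * ((p.factorial * p'.factorial : ℕ) : ℝ) ^ (ρ - 1))) ^ (1 / ρ)

/-- The `∞`-norm `‖A‖_∞ = sup_{α,α'} |A_{α,α'}| / (p!p'!)` on `M(p,p';F)`. -/
def rnormInf {n n' p p' : ℕ} {F : Type*} [RCLike F] (A : MMat n n' p p' F) : ℝ :=
  (⨆ x : MIdx n p × MIdx n' p', ‖A x.1 x.2‖) / ((p.factorial * p'.factorial : ℕ) : ℝ)

/-- The `σ`-norm of a vector in `F^n`, for a real exponent `σ`. -/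
def vnorm {n : ℕ} {F : Type*} [RCLike F] (σ : ℝ) (h : Fin n → F) : ℝ :=
  (∑ i, ‖h i‖ ^ σ) ^ (1 / σ)

/-- The `σ`-norm of a vector in `F^n`, for an extended real exponent `σ`
(`= max_i |h_i|` when `σ = ∞`). -/
def vnormE {n : ℕ} {F : Type*} [RCLike F] (σ : ℝ≥0∞) (h : Fin n → F) : ℝ :=
  if σ = ∞ then ⨆ i, ‖h i‖ else (∑ i, ‖h i‖ ^ σ.toReal) ^ (1 / σ.toReal)

/-- Absolute convergence of the power series `Σ_m x^{(m)}/m!·A(m)` at the point `h ∈ F^n`: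
for every column index `α'` of degree `q'`, the family `|h^α/α! · A(|α|)_{α,α'}|`, indexed by
all multi-indices `α ∈ ℕ^n`, is summable. -/
def AbsConvAt {n n' q' : ℕ} {F : Type*} [RCLike F]
    (A : (m : ℕ) → MMat n n' m q' F) (h : Fin n → F) : Prop :=
  ∀ α' : MIdx n' q', Summable fun α : Fin n → ℕ =>
    ‖(∏ i, h i ^ α i) / (mfact α : F) * A (mdeg α) ⟨α, rfl⟩ α'‖

/-- `r = limsup_m ‖A(m)‖_ρ^{1/m}`, the reciprocal of the radius of convergence,
computed in `ℝ≥0∞`. -/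
def convRadiusInv {n n' q' : ℕ} {F : Type*} [RCLike F] (ρ : ℝ)
    (A : (m : ℕ) → MMat n n' m q' F) : ℝ≥0∞ :=
  Filter.atTop.limsup fun m : ℕ => ENNReal.ofReal (rnorm ρ (A m)) ^ (1 / (m : ℝ))

/-- `r = limsup_m ‖A(m)‖_∞^{1/m}` computed in `ℝ≥0∞`. -/
def convRadiusInvInf {n n' q' : ℕ} {F : Type*} [RCLike F]
    (A : (m : ℕ) → MMat n n' m q' F) : ℝ≥0∞ :=
  Filter.atTop.limsup fun m : ℕ => ENNReal.ofReal (rnormInf (A m)) ^ (1 / (m : ℝ))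


section LexAux
variable {N : ℕ}

noncomputable instance lexLinOrderFinNat (N : ℕ) : LinearOrder (Lex (Fin N → ℕ)) :=
  @Pi.Lex.linearOrder (Fin N) (fun _ => ℕ) inferInstance
    (inferInstance : WellFoundedLT (Fin N)) inferInstance

private lemma lex_lt_def' {a b : Fin N → ℕ} :
    toLex a < toLex b ↔ ∃ i, (∀ j, j < i → a j = b j) ∧ a i < b i := Iff.rfl

private lemma lex_add_lt' {a b c d : Fin N → ℕ} (h1 : toLex a < toLex c)
    (h2 : toLex b ≤ toLex d) : toLex (a + b) < toLex (c + d) := by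
  obtain ⟨i, hji, hi⟩ := lex_lt_def'.mp h1
  rcases eq_or_lt_of_le h2 with heq | hlt
  · have hbd : b = d := toLex.injective heq
    subst hbd
    exact lex_lt_def'.mpr ⟨i, fun j hj => by simp [hji j hj],
      Nat.add_lt_add_right hi (b i)⟩
  · obtain ⟨k, hjk, hk⟩ := lex_lt_def'.mp hlt
    rcases le_total i k with h | h
    · refine lex_lt_def'.mpr ⟨i, fun j hj => by
        simp [hji j hj, hjk j (lt_of_lt_of_le hj h)], ?_⟩
      have hbd : b i ≤ d i := by
        rcases eq_or_lt_of_le h with rfl | h'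
        · exact hk.le
        · exact (hjk i h').le
      exact Nat.add_lt_add_of_lt_of_le hi hbd
    · refine lex_lt_def'.mpr ⟨k, fun j hj => by
        simp [hjk j hj, hji j (lt_of_lt_of_le hj h)], ?_⟩
      have hac : a k ≤ c k := by
        rcases eq_or_lt_of_le h with rfl | h'
        · exact hi.le
        · exact (hji k h').le
      exact Nat.add_lt_add_of_le_of_lt hac hk

private lemma lex_cancel' {a b c d : Fin N → ℕ} (hsum : a + b = c + d)
    (h1 : toLex a ≤ toLex c) (h2 : toLex b ≤ toLex d) : a = c ∧ b = d := by
  rcases eq_or_lt_of_le h1 with heq | hlt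
  · have hac : a = c := toLex.injective heq
    subst hac
    refine ⟨rfl, funext fun i => ?_⟩
    have := congrFun hsum i
    simpa using Nat.add_left_cancel this
  · exfalso
    have := lex_add_lt' hlt h2
    rw [hsum] at this
    exact lt_irrefl _ this

end LexAux

private lemma mdeg_add' {m : ℕ} (u v : Fin m → ℕ) : mdeg (u + v) = mdeg u + mdeg v := by
  simp [mdeg, Finset.sum_add_distrib]

private lemma mfact_pos' {m : ℕ} (u : Fin m → ℕ) : 0 < mfact u :=
  Finset.prod_pos fun i _ => Nat.factorial_pos _

/-- The product `⊙` has no zero divisors: `A⊙B = 0 ↔ A = 0 ∨ B = 0`. -/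
theorem oprod_eq_zero_iff {n n' p p' q q' : ℕ} {F : Type*} [RCLike F] (hn : 0 < n) (hn' : 0 < n')
    (A : MMat n n' p p' F) (B : MMat n n' q q' F) :
    oprod A B = 0 ↔ A = 0 ∨ B = 0 := by
  classical
  constructor
  · intro h
    by_contra hc
    push_neg at hc
    obtain ⟨hA, hB⟩ := hc
    -- maximal nonzero row of A
    obtain ⟨β, hβS, hβmax⟩ := Finset.exists_max_image
      (Finset.univ.filter fun β : MIdx n p => ∃ β', A β β' ≠ 0)
      (fun β => (toLex β.1 : Lex (Fin n → ℕ))) (by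
        by_contra hne
        rw [Finset.not_nonempty_iff_eq_empty, Finset.filter_eq_empty_iff] at hne
        refine hA (funext fun β => funext fun β' => ?_)
        have := hne (Finset.mem_univ β)
        push_neg at this
        exact this β')
    have hβrow : ∃ β', A β β' ≠ 0 := (Finset.mem_filter.mp hβS).2
    obtain ⟨β', hβ'S, hβ'max⟩ := Finset.exists_max_image
      (Finset.univ.filter fun β' : MIdx n' p' => A β β' ≠ 0)
      (fun β' => (toLex β'.1 : Lex (Fin n' → ℕ))) (by
        obtain ⟨β', hβ'⟩ := hβrow
        exact ⟨β', Finset.mem_filter.mpr ⟨Finset.mem_univ _, hβ'⟩⟩)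
    have hAββ' : A β β' ≠ 0 := (Finset.mem_filter.mp hβ'S).2
    -- maximal nonzero row of B
    obtain ⟨γ, hγS, hγmax⟩ := Finset.exists_max_image
      (Finset.univ.filter fun γ : MIdx n q => ∃ γ', B γ γ' ≠ 0)
      (fun γ => (toLex γ.1 : Lex (Fin n → ℕ))) (by
        by_contra hne
        rw [Finset.not_nonempty_iff_eq_empty, Finset.filter_eq_empty_iff] at hne
        refine hB (funext fun γ => funext fun γ' => ?_)
        have := hne (Finset.mem_univ γ)
        push_neg at this
        exact this γ')
    have hγrow : ∃ γ', B γ γ' ≠ 0 := (Finset.mem_filter.mp hγS).2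
    obtain ⟨γ', hγ'S, hγ'max⟩ := Finset.exists_max_image
      (Finset.univ.filter fun γ' : MIdx n' q' => B γ γ' ≠ 0)
      (fun γ' => (toLex γ'.1 : Lex (Fin n' → ℕ))) (by
        obtain ⟨γ', hγ'⟩ := hγrow
        exact ⟨γ', Finset.mem_filter.mpr ⟨Finset.mem_univ _, hγ'⟩⟩)
    have hBγγ' : B γ γ' ≠ 0 := (Finset.mem_filter.mp hγ'S).2
    -- maximality in convenient form
    have hAmax : ∀ (δ : MIdx n p) (δ' : MIdx n' p'), A δ δ' ≠ 0 → toLex δ.1 ≤ toLex β.1 :=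
      fun δ δ' hδ => hβmax δ (Finset.mem_filter.mpr ⟨Finset.mem_univ _, ⟨δ', hδ⟩⟩)
    have hAmax' : ∀ δ' : MIdx n' p', A β δ' ≠ 0 → toLex δ'.1 ≤ toLex β'.1 :=
      fun δ' hδ => hβ'max δ' (Finset.mem_filter.mpr ⟨Finset.mem_univ _, hδ⟩)
    have hBmax : ∀ (δ : MIdx n q) (δ' : MIdx n' q'), B δ δ' ≠ 0 → toLex δ.1 ≤ toLex γ.1 :=
      fun δ δ' hδ => hγmax δ (Finset.mem_filter.mpr ⟨Finset.mem_univ _, ⟨δ', hδ⟩⟩)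
    have hBmax' : ∀ δ' : MIdx n' q', B γ δ' ≠ 0 → toLex δ'.1 ≤ toLex γ'.1 :=
      fun δ' hδ => hγ'max δ' (Finset.mem_filter.mpr ⟨Finset.mem_univ _, hδ⟩)
    -- the special position
    set α : MIdx n (p + q) := ⟨β.1 + γ.1, by rw [mdeg_add', β.2, γ.2]⟩ with hα
    set α' : MIdx n' (p' + q') := ⟨β'.1 + γ'.1, by rw [mdeg_add', β'.2, γ'.2]⟩ with hα'
    have key : oprod A B α α' = 0 := by rw [h]; rfl
    rw [oprod] at key
    rw [← Finset.sum_product'] at key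
    rw [Finset.sum_eq_single_of_mem (β, β') (Finset.mem_product.mpr ⟨Finset.mem_univ _, Finset.mem_univ _⟩)] at key
    · -- the surviving term is nonzero, contradiction
      have hcond : (∀ i, β.1 i ≤ α.1 i) ∧ (∀ j, β'.1 j ≤ α'.1 j) :=
        ⟨fun i => Nat.le_add_right _ _, fun j => Nat.le_add_right _ _⟩
      rw [dif_pos hcond] at key
      have hsub : α.1 - β.1 = γ.1 := funext fun i => by
        show β.1 i + γ.1 i - β.1 i = γ.1 i
        omega
      have hsub' : α'.1 - β'.1 = γ'.1 := funext fun j => by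
        show β'.1 j + γ'.1 j - β'.1 j = γ'.1 j
        omega
      have hrB : (⟨α.1 - β.1, mdeg_sub α β hcond.1⟩ : MIdx n q) = γ := Subtype.ext hsub
      have hcB : (⟨α'.1 - β'.1, mdeg_sub α' β' hcond.2⟩ : MIdx n' q') = γ' := Subtype.ext hsub'
      rw [hrB, hcB] at key
      have hcoef : (mfact α.1 : F) / ((mfact β.1 : F) * (mfact (α.1 - β.1) : F)) ≠ 0 := by
        apply div_ne_zero
        · exact_mod_cast (mfact_pos' α.1).ne'
        · exact mul_ne_zero (by exact_mod_cast (mfact_pos' β.1).ne')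
            (by exact_mod_cast (mfact_pos' (α.1 - β.1)).ne')
      exact mul_ne_zero (mul_ne_zero hcoef hAββ') hBγγ' key
    · -- all other terms vanish
      rintro ⟨δ, δ'⟩ - hne
      by_cases hcond : (∀ i, δ.1 i ≤ α.1 i) ∧ (∀ j, δ'.1 j ≤ α'.1 j)
      · rw [dif_pos hcond]
        by_contra hterm
        have hA0 : A δ δ' ≠ 0 := fun h0 => hterm (by rw [h0, mul_zero, zero_mul])
        have hB0 : B ⟨α.1 - δ.1, mdeg_sub α δ hcond.1⟩ ⟨α'.1 - δ'.1, mdeg_sub α' δ' hcond.2⟩ ≠ 0 :=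
          fun h0 => hterm (by rw [h0, mul_zero])
        have hsum : δ.1 + (α.1 - δ.1) = β.1 + γ.1 := funext fun i => by
          have := hcond.1 i
          show δ.1 i + (α.1 i - δ.1 i) = β.1 i + γ.1 i
          have hαi : α.1 i = β.1 i + γ.1 i := rfl
          omega
        have h1 : toLex δ.1 ≤ toLex β.1 := hAmax δ δ' hA0
        have h2 : toLex (α.1 - δ.1) ≤ toLex γ.1 :=
          hBmax ⟨α.1 - δ.1, mdeg_sub α δ hcond.1⟩ _ hB0
        obtain ⟨hδβ, hεγ⟩ := lex_cancel' hsum h1 h2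
        have hδβ' : δ = β := Subtype.ext hδβ
        subst hδβ'
        have hrB : (⟨α.1 - δ.1, mdeg_sub α δ hcond.1⟩ : MIdx n q) = γ := Subtype.ext hεγ
        rw [hrB] at hB0
        have hsum' : δ'.1 + (α'.1 - δ'.1) = β'.1 + γ'.1 := funext fun j => by
          have := hcond.2 j
          show δ'.1 j + (α'.1 j - δ'.1 j) = β'.1 j + γ'.1 j
          have hαj : α'.1 j = β'.1 j + γ'.1 j := rfl
          omega
        have h1' : toLex δ'.1 ≤ toLex β'.1 := hAmax' δ' hA0
        have h2' : toLex (α'.1 - δ'.1) ≤ toLex γ'.1 := hBmax' _ hB0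
        obtain ⟨hδβ'2, -⟩ := lex_cancel' hsum' h1' h2'
        exact hne (by rw [Prod.mk.injEq]; exact ⟨rfl, Subtype.ext hδβ'2⟩)
      · rw [dif_neg hcond]
  · rintro (h | h) <;> subst h <;> funext α α' <;>
      simp only [oprod, Pi.zero_apply, mul_zero, zero_mul] <;>
      · refine Finset.sum_eq_zero fun δ _ => Finset.sum_eq_zero fun δ' _ => ?_
        split <;> simp

end
end

section
/- For every real ρ ≥ 1 and all A ∈ M(p,p';F), B ∈ M(q,q';F), the ρ-norm is submultiplicative with respect to ⊙: ‖A⊙B‖_ρ ≤ ‖A‖_ρ·‖B‖_ρ. -/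
open scoped BigOperators ENNReal

noncomputable section

/-- weighted power mean inequality -/
lemma wpm {ι : Type*} (s : Finset ι) (w z : ι → ℝ) (hw : ∀ i ∈ s, 0 ≤ w i)
    (hz : ∀ i ∈ s, 0 ≤ z i) {ρ : ℝ} (hρ : 1 ≤ ρ) :
    (∑ i ∈ s, w i * z i) ^ ρ ≤ (∑ i ∈ s, w i) ^ (ρ - 1) * ∑ i ∈ s, w i * z i ^ ρ := by
  set W := ∑ i ∈ s, w i with hW
  have hW0 : 0 ≤ W := Finset.sum_nonneg hw
  rcases eq_or_lt_of_le hW0 with h0 | h0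
  · have hz0 : ∀ i ∈ s, w i = 0 := by
      intro i hi
      exact (Finset.sum_eq_zero_iff_of_nonneg hw).mp h0.symm i hi
    have h1 : ∑ i ∈ s, w i * z i = 0 := Finset.sum_eq_zero fun i hi => by rw [hz0 i hi]; ring
    have h2 : ∑ i ∈ s, w i * z i ^ ρ = 0 := Finset.sum_eq_zero fun i hi => by rw [hz0 i hi]; ring
    rw [h1, h2, Real.zero_rpow (by linarith), mul_zero]
  · have key := Real.rpow_arith_mean_le_arith_mean_rpow s (fun i => w i / W) z
      (fun i hi => div_nonneg (hw i hi) hW0)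
      (by rw [← Finset.sum_div, ← hW]; field_simp) hz hρ
    have e1 : ∑ i ∈ s, w i / W * z i = (∑ i ∈ s, w i * z i) / W := by
      rw [Finset.sum_div]; exact Finset.sum_congr rfl fun i _ => by ring
    have e2 : ∑ i ∈ s, w i / W * z i ^ ρ = (∑ i ∈ s, w i * z i ^ ρ) / W := by
      rw [Finset.sum_div]; exact Finset.sum_congr rfl fun i _ => by ring
    rw [e1, e2, Real.div_rpow
      (Finset.sum_nonneg fun i hi => mul_nonneg (hw i hi) (hz i hi)) hW0] at key
    have hWρ : (0:ℝ) < W ^ ρ := Real.rpow_pos_of_pos h0 _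
    rw [div_le_div_iff₀ hWρ h0] at key
    have hsub : W ^ (ρ - 1) = W ^ ρ / W := by
      rw [Real.rpow_sub h0, Real.rpow_one]
    rw [hsub, div_mul_eq_mul_div, le_div_iff₀ h0]
    calc (∑ i ∈ s, w i * z i) ^ ρ * W ≤ (∑ i ∈ s, w i * z i ^ ρ) * W ^ ρ := key
      _ = W ^ ρ * ∑ i ∈ s, w i * z i ^ ρ := by ring

lemma vandermonde_tuple : ∀ (n p : ℕ) (α : Fin n → ℕ),
    ∑ β ∈ Finset.Nat.antidiagonalTuple n p, ∏ i, (α i).choose (β i) = (∑ i, α i).choose p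
  | 0, p, α => by
      cases p with
      | zero => simp
      | succ p => simp [Finset.Nat.antidiagonalTuple_zero_succ]
  | n+1, p, α => by
      have step : ∀ ab ∈ Finset.HasAntidiagonal.antidiagonal p,
          (α 0).choose ab.1 * (∑ i : Fin n, α i.succ).choose ab.2
          = ∑ t ∈ Finset.Nat.antidiagonalTuple n ab.2,
              (α 0).choose ab.1 * ∏ i : Fin n, (α i.succ).choose (t i) := by
        intro ab _
        rw [← Finset.mul_sum, vandermonde_tuple n ab.2 (fun i => α i.succ)]
      rw [Fin.sum_univ_succ, Nat.add_choose_eq, Finset.sum_congr rfl step, Finset.sum_sigma']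
      refine Finset.sum_nbij' (fun (β : Fin (n+1) → ℕ) => (⟨(β 0, ∑ i : Fin n, β i.succ), Fin.tail β⟩ :
          (_ : ℕ × ℕ) × (Fin n → ℕ)))
        (fun x => Fin.cons x.1.1 x.2) ?_ ?_ ?_ ?_ ?_
      · intro β hβ
        rw [Finset.Nat.mem_antidiagonalTuple] at hβ
        rw [Finset.mem_sigma, Finset.HasAntidiagonal.mem_antidiagonal]
        refine ⟨by rw [← hβ, Fin.sum_univ_succ], ?_⟩
        rw [Finset.Nat.mem_antidiagonalTuple]; rfl
      · intro x hx
        rw [Finset.mem_sigma] at hx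
        obtain ⟨h1, h2⟩ := hx
        rw [Finset.HasAntidiagonal.mem_antidiagonal] at h1
        rw [Finset.Nat.mem_antidiagonalTuple] at h2 ⊢
        rw [Fin.sum_cons, h2, h1]
      · intro β _
        exact Fin.cons_self_tail β
      · intro x hx
        rw [Finset.mem_sigma, Finset.Nat.mem_antidiagonalTuple] at hx
        refine Sigma.ext ?_ ?_
        · simp only [Fin.cons_zero, Fin.cons_succ]
          exact Prod.ext rfl hx.2
        · simp [Fin.tail_cons]
      · intro β _
        rw [Fin.prod_univ_succ]
        rfl

lemma mdeg_add {n : ℕ} (a b : Fin n → ℕ) : mdeg (a + b) = mdeg a + mdeg b := by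
  simp [mdeg, Finset.sum_add_distrib]

lemma mfact_pos {n : ℕ} (α : Fin n → ℕ) : 0 < mfact α :=
  Finset.prod_pos fun i _ => Nat.factorial_pos _

lemma mfact_choose {n : ℕ} {α β : Fin n → ℕ} (h : ∀ i, β i ≤ α i) :
    (∏ i, (α i).choose (β i)) * (mfact β * mfact (α - β)) = mfact α := by
  simp only [mfact, ← Finset.prod_mul_distrib]
  refine Finset.prod_congr rfl fun i _ => ?_
  have := Nat.choose_mul_factorial_mul_factorial (h i)
  rw [Pi.sub_apply, ← this]
  ring

lemma coeff_eq {F : Type*} [RCLike F] {n : ℕ} {α β : Fin n → ℕ} (h : ∀ i, β i ≤ α i) :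
    (mfact α : F) / ((mfact β : F) * (mfact (α - β) : F))
      = ((∏ i, (α i).choose (β i) : ℕ) : F) := by
  have h1 := mfact_choose h
  have hb : ((mfact β : F) * (mfact (α - β) : F)) ≠ 0 :=
    mul_ne_zero (Nat.cast_ne_zero.mpr (mfact_pos β).ne')
      (Nat.cast_ne_zero.mpr (mfact_pos (α - β)).ne')
  rw [div_eq_iff hb]
  push_cast [← h1]
  ring

lemma vandermonde_midx {n : ℕ} (p : ℕ) (α : Fin n → ℕ) :
    ∑ β : MIdx n p, ∏ i, (α i).choose (β.1 i) = (mdeg α).choose p := by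
  rw [← Finset.sum_subtype (Finset.Nat.antidiagonalTuple n p)
      (fun β => by simp [Finset.Nat.mem_antidiagonalTuple, mdeg])
      (fun β => ∏ i, (α i).choose (β i))]
  rw [vandermonde_tuple n p α]
  rfl

/-- The key reindexing: summing over `α` of degree `p+q` and `β ≤ α` of degree `p`
is the same as summing over independent `β` of degree `p` and `γ` of degree `q`. -/
lemma sum_split {M : Type*} [AddCommMonoid M] {n p q : ℕ} (f : MIdx n p → MIdx n q → M) :
    (∑ α : MIdx n (p + q), ∑ β : MIdx n p,
      if h : ∀ i, β.1 i ≤ α.1 i then f β ⟨α.1 - β.1, mdeg_sub α β h⟩ else 0)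
    = ∑ β : MIdx n p, ∑ γ : MIdx n q, f β γ := by
  classical
  set P : MIdx n (p + q) × MIdx n p → Prop := fun x => ∀ i, x.2.1 i ≤ x.1.1 i with hP
  set g : MIdx n (p + q) × MIdx n p → M := fun x =>
    if h : P x then f x.2 ⟨x.1.1 - x.2.1, mdeg_sub x.1 x.2 h⟩ else 0 with hg
  have e0 : (∑ α : MIdx n (p + q), ∑ β : MIdx n p,
      if h : ∀ i, β.1 i ≤ α.1 i then f β ⟨α.1 - β.1, mdeg_sub α β h⟩ else 0)
      = ∑ x : MIdx n (p + q) × MIdx n p, g x := by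
    rw [Fintype.sum_prod_type]
  have e1 : ∑ x : {x // P x}, g x.1 = ∑ x : MIdx n (p + q) × MIdx n p, g x := by
    rw [← Fintype.sum_subtype_add_sum_subtype P g]
    have : ∑ x : {x // ¬ P x}, g x.1 = 0 :=
      Finset.sum_eq_zero fun x _ => dif_neg x.2
    rw [this, add_zero]
  let e : MIdx n p × MIdx n q ≃ {x : MIdx n (p + q) × MIdx n p // P x} :=
    { toFun := fun y => ⟨(⟨y.1.1 + y.2.1, by
        rw [mdeg_add, y.1.2, y.2.2]⟩, y.1), fun i => Nat.le_add_right _ _⟩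
      invFun := fun x => (x.1.2, ⟨x.1.1.1 - x.1.2.1, mdeg_sub x.1.1 x.1.2 x.2⟩)
      left_inv := fun y => by
        refine Prod.ext rfl (Subtype.ext ?_)
        funext i
        simp
      right_inv := fun x => by
        refine Subtype.ext (Prod.ext (Subtype.ext ?_) rfl)
        funext i
        simp only [Pi.add_apply, Pi.sub_apply]
        exact Nat.add_sub_cancel' (x.2 i) }
  have e2 : ∑ x : {x // P x}, g x.1 = ∑ y : MIdx n p × MIdx n q, g (e y).1 :=
    (Equiv.sum_comp e fun x => g x.1).symm
  have e3 : ∀ y : MIdx n p × MIdx n q, g (e y).1 = f y.1 y.2 := by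
    intro y
    have hy : P ((e y).1) := (e y).2
    simp only [hg, e, Equiv.coe_fn_mk]
    rw [dif_pos (by exact fun i => Nat.le_add_right _ _)]
    congr 1
    refine Subtype.ext ?_
    funext i
    simp only [Pi.add_apply, Pi.sub_apply]
    omega
  rw [e0, ← e1, e2, Finset.sum_congr rfl fun y _ => e3 y, Fintype.sum_prod_type]

private lemma field_helper (Kρ cC m1 m2 Pc Qc X Y : ℝ) (h1 : Kρ ≠ 0) (h2 : cC ≠ 0)
    (h3 : m1 ≠ 0) (h4 : m2 ≠ 0) (h5 : Pc ≠ 0) (h6 : Qc ≠ 0) :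
    Kρ * (cC * (X * Y)) / (cC * (m1 * m2) * (Kρ * (Pc * Qc))) = X / (m1 * Pc) * (Y / (m2 * Qc)) := by
  field_simp

private lemma cancel_helper (u v x : ℝ) (hv : v ≠ 0) : u * v * (x / v) = u * x := by
  field_simp

/-- For every real `ρ ≥ 1`, the `ρ`-norm is submultiplicative with respect to `⊙`:
`‖A⊙B‖_ρ ≤ ‖A‖_ρ·‖B‖_ρ`. -/
theorem rnorm_oprod_le {n n' p p' q q' : ℕ} {F : Type*} [RCLike F] (hn : 0 < n) (hn' : 0 < n')
    (ρ : ℝ) (hρ : 1 ≤ ρ) (A : MMat n n' p p' F) (B : MMat n n' q q' F) :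
    rnorm ρ (oprod A B) ≤ rnorm ρ A * rnorm ρ B := by
  classical
  have hρ0 : (0:ℝ) < ρ := lt_of_lt_of_le one_pos hρ
  have hρ1 : (0:ℝ) ≤ ρ - 1 := by linarith
  set Pc : ℝ := ((p.factorial * p'.factorial : ℕ) : ℝ) ^ (ρ - 1) with hPc
  set Qc : ℝ := ((q.factorial * q'.factorial : ℕ) : ℝ) ^ (ρ - 1) with hQc
  set Dc : ℝ := (((p+q).factorial * (p'+q').factorial : ℕ) : ℝ) ^ (ρ - 1) with hDc
  set K : ℝ := (((p+q).choose p * (p'+q').choose p' : ℕ) : ℝ) with hK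
  have hK1 : (1:ℝ) ≤ K := by
    rw [hK]
    exact_mod_cast Nat.one_le_iff_ne_zero.mpr (Nat.mul_ne_zero
      (Nat.choose_pos (Nat.le_add_right p q)).ne'
      (Nat.choose_pos (Nat.le_add_right p' q')).ne')
  have hK0 : (0:ℝ) < K := lt_of_lt_of_le one_pos hK1
  have hPc0 : (0:ℝ) < Pc := by
    rw [hPc]
    exact Real.rpow_pos_of_pos (by exact_mod_cast Nat.mul_pos p.factorial_pos p'.factorial_pos) _
  have hQc0 : (0:ℝ) < Qc := by
    rw [hQc]
    exact Real.rpow_pos_of_pos (by exact_mod_cast Nat.mul_pos q.factorial_pos q'.factorial_pos) _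
  -- `Dc = K^(ρ-1) * (Pc * Qc)`
  have hDfact : ((p+q).factorial * (p'+q').factorial : ℕ)
      = ((p+q).choose p * (p'+q').choose p') * ((p.factorial * p'.factorial) * (q.factorial * q'.factorial)) := by
    have h1 : (p+q).choose p * p.factorial * q.factorial = (p+q).factorial := by
      have := Nat.choose_mul_factorial_mul_factorial (Nat.le_add_right p q)
      rwa [Nat.add_sub_cancel_left] at this
    have h2 : (p'+q').choose p' * p'.factorial * q'.factorial = (p'+q').factorial := by
      have := Nat.choose_mul_factorial_mul_factorial (Nat.le_add_right p' q')
      rwa [Nat.add_sub_cancel_left] at this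
    rw [← h1, ← h2]
    ring
  have hDsplit : Dc = K ^ (ρ - 1) * (Pc * Qc) := by
    rw [hDc, hDfact, Nat.cast_mul, Real.mul_rpow (Nat.cast_nonneg _) (Nat.cast_nonneg _),
      Nat.cast_mul (p.factorial * p'.factorial),
      Real.mul_rpow (Nat.cast_nonneg _) (Nat.cast_nonneg _)]
  set a : MIdx n p → MIdx n' p' → ℝ :=
    fun β β' => ‖A β β'‖ ^ ρ / ((mfact β.1 : ℝ) * Pc) with ha
  set b : MIdx n q → MIdx n' q' → ℝ :=
    fun γ γ' => ‖B γ γ'‖ ^ ρ / ((mfact γ.1 : ℝ) * Qc) with hb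
  have ha0 : ∀ β β', 0 ≤ a β β' := fun β β' =>
    div_nonneg (Real.rpow_nonneg (norm_nonneg _) _) (by positivity)
  have hb0 : ∀ γ γ', 0 ≤ b γ γ' := fun γ γ' =>
    div_nonneg (Real.rpow_nonneg (norm_nonneg _) _) (by positivity)
  -- entrywise bound
  have ent : ∀ (α : MIdx n (p+q)) (α' : MIdx n' (p'+q')),
      ‖oprod A B α α'‖ ^ ρ / ((mfact α.1 : ℝ) * Dc) ≤
        ∑ x : MIdx n p × MIdx n' p',
          if h : (∀ i, x.1.1 i ≤ α.1 i) ∧ (∀ j, x.2.1 j ≤ α'.1 j) then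
            a x.1 x.2 * b ⟨α.1 - x.1.1, mdeg_sub α x.1 h.1⟩ ⟨α'.1 - x.2.1, mdeg_sub α' x.2 h.2⟩
          else 0 := by
    intro α α'
    set w : MIdx n p × MIdx n' p' → ℝ := fun x =>
      if (∀ i, x.1.1 i ≤ α.1 i) ∧ (∀ j, x.2.1 j ≤ α'.1 j) then
        (((∏ i, (α.1 i).choose (x.1.1 i)) * (∏ j, (α'.1 j).choose (x.2.1 j)) : ℕ) : ℝ) else 0
      with hw
    set z : MIdx n p × MIdx n' p' → ℝ := fun x =>
      if h : (∀ i, x.1.1 i ≤ α.1 i) ∧ (∀ j, x.2.1 j ≤ α'.1 j) then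
        ‖A x.1 x.2‖ * ‖B ⟨α.1 - x.1.1, mdeg_sub α x.1 h.1⟩ ⟨α'.1 - x.2.1, mdeg_sub α' x.2 h.2⟩‖
          / ((∏ j, (α'.1 j).choose (x.2.1 j) : ℕ) : ℝ) else 0 with hz
    have hwnn : ∀ x, 0 ≤ w x := by
      intro x
      rw [hw]
      dsimp only
      split <;> positivity
    have hznn : ∀ x, 0 ≤ z x := by
      intro x
      rw [hz]
      dsimp only
      split <;> positivity
    have hcpos : ∀ x : MIdx n p × MIdx n' p', (∀ j, x.2.1 j ≤ α'.1 j) →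
        (1:ℝ) ≤ ((∏ j, (α'.1 j).choose (x.2.1 j) : ℕ) : ℝ) := by
      intro x h
      exact_mod_cast Nat.one_le_iff_ne_zero.mpr
        (Finset.prod_pos fun j _ => Nat.choose_pos (h j)).ne'
    -- step 1: entry norm bounded by ∑ w z
    have h1 : ‖oprod A B α α'‖ ≤ ∑ x : MIdx n p × MIdx n' p', w x * z x := by
      have hwz : ∀ x : MIdx n p × MIdx n' p', w x * z x =
          if h : (∀ i, x.1.1 i ≤ α.1 i) ∧ (∀ j, x.2.1 j ≤ α'.1 j) then
            ((∏ i, (α.1 i).choose (x.1.1 i) : ℕ) : ℝ) *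
              (‖A x.1 x.2‖ * ‖B ⟨α.1 - x.1.1, mdeg_sub α x.1 h.1⟩ ⟨α'.1 - x.2.1, mdeg_sub α' x.2 h.2⟩‖)
          else 0 := by
        intro x
        by_cases h : (∀ i, x.1.1 i ≤ α.1 i) ∧ (∀ j, x.2.1 j ≤ α'.1 j)
        · rw [hw, hz]
          dsimp only
          rw [if_pos h, dif_pos h, dif_pos h]
          have hne : ((∏ j, (α'.1 j).choose (x.2.1 j) : ℕ) : ℝ) ≠ 0 := by
            have := hcpos x h.2
            linarith
          rw [Nat.cast_mul]
          exact cancel_helper _ _ _ hne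
        · simp only [hw, hz, if_neg h, dif_neg h, zero_mul]
      rw [Fintype.sum_prod_type]
      calc ‖oprod A B α α'‖
          ≤ ∑ β : MIdx n p, ∑ β' : MIdx n' p', ‖if h : (∀ i, β.1 i ≤ α.1 i) ∧ (∀ j, β'.1 j ≤ α'.1 j) then
              ((mfact α.1 : F) / ((mfact β.1 : F) * (mfact (α.1 - β.1) : F))) * A β β' *
                B ⟨α.1 - β.1, mdeg_sub α β h.1⟩ ⟨α'.1 - β'.1, mdeg_sub α' β' h.2⟩ else 0‖ := by
            refine (norm_sum_le _ _).trans (Finset.sum_le_sum fun β _ => norm_sum_le _ _)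
        _ = ∑ β : MIdx n p, ∑ β' : MIdx n' p', w (β, β') * z (β, β') := by
            refine Finset.sum_congr rfl fun β _ => Finset.sum_congr rfl fun β' _ => ?_
            rw [hwz (β, β')]
            by_cases h : (∀ i, β.1 i ≤ α.1 i) ∧ (∀ j, β'.1 j ≤ α'.1 j)
            · rw [dif_pos h, dif_pos h, norm_mul, norm_mul, coeff_eq h.1, RCLike.norm_natCast]
              ring
            · rw [dif_neg h, dif_neg h, norm_zero]
    -- step 2: power mean
    have h2 := wpm Finset.univ w z (fun x _ => hwnn x) (fun x _ => hznn x) hρ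
    -- step 3: sum of weights equals K
    have h3 : ∑ x : MIdx n p × MIdx n' p', w x ≤ K := by
      have hle : ∀ x : MIdx n p × MIdx n' p', w x ≤
          (((∏ i, (α.1 i).choose (x.1.1 i)) * (∏ j, (α'.1 j).choose (x.2.1 j)) : ℕ) : ℝ) := by
        intro x
        rw [hw]
        dsimp only
        split
        · exact le_refl _
        · positivity
      calc ∑ x : MIdx n p × MIdx n' p', w x
          ≤ ∑ x : MIdx n p × MIdx n' p',
            (((∏ i, (α.1 i).choose (x.1.1 i)) * (∏ j, (α'.1 j).choose (x.2.1 j)) : ℕ) : ℝ) :=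
            Finset.sum_le_sum fun x _ => hle x
        _ = K := by
            rw [hK, ← Nat.cast_sum]
            congr 1
            rw [Fintype.sum_prod_type]
            dsimp only
            rw [← Finset.sum_mul_sum,
              vandermonde_midx p α.1, α.2, vandermonde_midx p' α'.1, α'.2]
    -- step 4: bound ∑ w z^ρ
    have h4 : ∑ x : MIdx n p × MIdx n' p', w x * z x ^ ρ ≤
        ∑ x : MIdx n p × MIdx n' p',
          if h : (∀ i, x.1.1 i ≤ α.1 i) ∧ (∀ j, x.2.1 j ≤ α'.1 j) then
            ((∏ i, (α.1 i).choose (x.1.1 i) : ℕ) : ℝ) *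
              (‖A x.1 x.2‖ ^ ρ *
                ‖B ⟨α.1 - x.1.1, mdeg_sub α x.1 h.1⟩ ⟨α'.1 - x.2.1, mdeg_sub α' x.2 h.2⟩‖ ^ ρ)
          else 0 := by
      refine Finset.sum_le_sum fun x _ => ?_
      by_cases h : (∀ i, x.1.1 i ≤ α.1 i) ∧ (∀ j, x.2.1 j ≤ α'.1 j)
      · rw [hw, hz]
        dsimp only
        rw [if_pos h, dif_pos h, dif_pos h, Nat.cast_mul]
        set cA := ((∏ i, (α.1 i).choose (x.1.1 i) : ℕ) : ℝ) with hcA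
        set cB := ((∏ j, (α'.1 j).choose (x.2.1 j) : ℕ) : ℝ) with hcB
        set nA := ‖A x.1 x.2‖ with hnA
        set nB := ‖B ⟨α.1 - x.1.1, mdeg_sub α x.1 h.1⟩ ⟨α'.1 - x.2.1, mdeg_sub α' x.2 h.2⟩‖ with hnB
        have hcB1 : (1:ℝ) ≤ cB := hcpos x h.2
        have hcB0 : (0:ℝ) < cB := lt_of_lt_of_le one_pos hcB1
        have hcA0 : (0:ℝ) ≤ cA := by rw [hcA]; positivity
        have hdiv : (nA * nB / cB) ^ ρ = nA ^ ρ * nB ^ ρ / cB ^ ρ := by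
          rw [Real.div_rpow (by positivity) hcB0.le,
            Real.mul_rpow (norm_nonneg _) (norm_nonneg _)]
        rw [hdiv]
        have hcBρ : cB ≤ cB ^ ρ := by
          nth_rewrite 1 [← Real.rpow_one cB]
          exact Real.rpow_le_rpow_of_exponent_le hcB1 hρ
        have hfrac : cB / cB ^ ρ ≤ 1 :=
          (div_le_one (Real.rpow_pos_of_pos hcB0 _)).mpr hcBρ
        have heq : cA * cB * (nA ^ ρ * nB ^ ρ / cB ^ ρ)
            = cA * (nA ^ ρ * nB ^ ρ) * (cB / cB ^ ρ) := by
          field_simp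
        rw [heq]
        refine mul_le_of_le_one_right ?_ hfrac
        positivity
      · rw [hw]
        dsimp only
        rw [if_neg h, dif_neg h, zero_mul]
    -- combine into entry bound
    have hTnn : 0 ≤ ∑ x : MIdx n p × MIdx n' p',
        if h : (∀ i, x.1.1 i ≤ α.1 i) ∧ (∀ j, x.2.1 j ≤ α'.1 j) then
          ((∏ i, (α.1 i).choose (x.1.1 i) : ℕ) : ℝ) *
            (‖A x.1 x.2‖ ^ ρ *
              ‖B ⟨α.1 - x.1.1, mdeg_sub α x.1 h.1⟩ ⟨α'.1 - x.2.1, mdeg_sub α' x.2 h.2⟩‖ ^ ρ)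
        else 0 := by
      refine Finset.sum_nonneg fun x _ => ?_
      split
      · positivity
      · exact le_refl 0
    have h5 : ‖oprod A B α α'‖ ^ ρ ≤ K ^ (ρ - 1) * ∑ x : MIdx n p × MIdx n' p',
        if h : (∀ i, x.1.1 i ≤ α.1 i) ∧ (∀ j, x.2.1 j ≤ α'.1 j) then
          ((∏ i, (α.1 i).choose (x.1.1 i) : ℕ) : ℝ) *
            (‖A x.1 x.2‖ ^ ρ *
              ‖B ⟨α.1 - x.1.1, mdeg_sub α x.1 h.1⟩ ⟨α'.1 - x.2.1, mdeg_sub α' x.2 h.2⟩‖ ^ ρ)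
        else 0 := by
      calc ‖oprod A B α α'‖ ^ ρ
          ≤ (∑ x : MIdx n p × MIdx n' p', w x * z x) ^ ρ :=
            Real.rpow_le_rpow (norm_nonneg _) h1 hρ0.le
        _ ≤ (∑ x : MIdx n p × MIdx n' p', w x) ^ (ρ - 1)
              * ∑ x : MIdx n p × MIdx n' p', w x * z x ^ ρ := h2
        _ ≤ K ^ (ρ - 1) * ∑ x : MIdx n p × MIdx n' p',
              (if h : (∀ i, x.1.1 i ≤ α.1 i) ∧ (∀ j, x.2.1 j ≤ α'.1 j) then
                ((∏ i, (α.1 i).choose (x.1.1 i) : ℕ) : ℝ) *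
                  (‖A x.1 x.2‖ ^ ρ *
                    ‖B ⟨α.1 - x.1.1, mdeg_sub α x.1 h.1⟩ ⟨α'.1 - x.2.1, mdeg_sub α' x.2 h.2⟩‖ ^ ρ)
              else 0) := by
            refine mul_le_mul ?_ h4 ?_ ?_
            · exact Real.rpow_le_rpow (Finset.sum_nonneg fun x _ => hwnn x) h3 hρ1
            · exact Finset.sum_nonneg fun x _ => mul_nonneg (hwnn x)
                (Real.rpow_nonneg (hznn x) _)
            · positivity
    -- divide by denominator and identify terms
    have hMα : (0:ℝ) < (mfact α.1 : ℝ) := by exact_mod_cast mfact_pos α.1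
    have hden : (0:ℝ) < (mfact α.1 : ℝ) * Dc := by
      rw [hDsplit]; positivity
    calc ‖oprod A B α α'‖ ^ ρ / ((mfact α.1 : ℝ) * Dc)
        ≤ (K ^ (ρ - 1) * ∑ x : MIdx n p × MIdx n' p',
            (if h : (∀ i, x.1.1 i ≤ α.1 i) ∧ (∀ j, x.2.1 j ≤ α'.1 j) then
              ((∏ i, (α.1 i).choose (x.1.1 i) : ℕ) : ℝ) *
                (‖A x.1 x.2‖ ^ ρ *
                  ‖B ⟨α.1 - x.1.1, mdeg_sub α x.1 h.1⟩ ⟨α'.1 - x.2.1, mdeg_sub α' x.2 h.2⟩‖ ^ ρ)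
            else 0)) / ((mfact α.1 : ℝ) * Dc) := by
          exact div_le_div_of_nonneg_right h5 hden.le
      _ = ∑ x : MIdx n p × MIdx n' p',
            (if h : (∀ i, x.1.1 i ≤ α.1 i) ∧ (∀ j, x.2.1 j ≤ α'.1 j) then
              a x.1 x.2 * b ⟨α.1 - x.1.1, mdeg_sub α x.1 h.1⟩ ⟨α'.1 - x.2.1, mdeg_sub α' x.2 h.2⟩
            else 0) := by
          rw [Finset.mul_sum, Finset.sum_div]
          refine Finset.sum_congr rfl fun x _ => ?_
          by_cases h : (∀ i, x.1.1 i ≤ α.1 i) ∧ (∀ j, x.2.1 j ≤ α'.1 j)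
          · rw [dif_pos h, dif_pos h]
            rw [ha, hb]
            dsimp only
            have hfa : (mfact α.1 : ℝ)
                = ((∏ i, (α.1 i).choose (x.1.1 i) : ℕ) : ℝ)
                    * ((mfact x.1.1 : ℝ) * (mfact (α.1 - x.1.1) : ℝ)) := by
              rw [← Nat.cast_mul, ← Nat.cast_mul, ← mfact_choose h.1]
            have hc0 : (0:ℝ) < ((∏ i, (α.1 i).choose (x.1.1 i) : ℕ) : ℝ) := by
              exact_mod_cast Finset.prod_pos fun i _ => Nat.choose_pos (h.1 i)
            have hm1 : (0:ℝ) < (mfact x.1.1 : ℝ) := by exact_mod_cast mfact_pos x.1.1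
            have hm2 : (0:ℝ) < (mfact (α.1 - x.1.1) : ℝ) := by
              exact_mod_cast mfact_pos (α.1 - x.1.1)
            have hKρ : (0:ℝ) < K ^ (ρ - 1) := Real.rpow_pos_of_pos hK0 _
            rw [hDsplit, hfa]
            exact field_helper _ _ _ _ _ _ _ _ hKρ.ne' hc0.ne' hm1.ne' hm2.ne' hPc0.ne' hQc0.ne'
          · rw [dif_neg h, dif_neg h, mul_zero, zero_div]
  -- now sum the entry bound over α, α' and reindex
  have key : (∑ α : MIdx n (p+q), ∑ α' : MIdx n' (p'+q'),
      ‖oprod A B α α'‖ ^ ρ / ((mfact α.1 : ℝ) * Dc))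
      ≤ (∑ β : MIdx n p, ∑ β' : MIdx n' p', a β β') *
        (∑ γ : MIdx n q, ∑ γ' : MIdx n' q', b γ γ') := by
    have step1 : (∑ α : MIdx n (p+q), ∑ α' : MIdx n' (p'+q'),
        ‖oprod A B α α'‖ ^ ρ / ((mfact α.1 : ℝ) * Dc))
        ≤ ∑ α : MIdx n (p+q), ∑ α' : MIdx n' (p'+q'),
          ∑ x : MIdx n p × MIdx n' p',
            (if h : (∀ i, x.1.1 i ≤ α.1 i) ∧ (∀ j, x.2.1 j ≤ α'.1 j) then
              a x.1 x.2 * b ⟨α.1 - x.1.1, mdeg_sub α x.1 h.1⟩ ⟨α'.1 - x.2.1, mdeg_sub α' x.2 h.2⟩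
            else 0) :=
      Finset.sum_le_sum fun α _ => Finset.sum_le_sum fun α' _ => ent α α'
    refine step1.trans (le_of_eq ?_)
    -- reorganize the quadruple sum
    have swap : ∀ α : MIdx n (p+q),
        (∑ α' : MIdx n' (p'+q'), ∑ x : MIdx n p × MIdx n' p',
          (if h : (∀ i, x.1.1 i ≤ α.1 i) ∧ (∀ j, x.2.1 j ≤ α'.1 j) then
            a x.1 x.2 * b ⟨α.1 - x.1.1, mdeg_sub α x.1 h.1⟩ ⟨α'.1 - x.2.1, mdeg_sub α' x.2 h.2⟩
          else 0))
        = ∑ β : MIdx n p,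
            (if h : ∀ i, β.1 i ≤ α.1 i then
              (∑ α' : MIdx n' (p'+q'), ∑ β' : MIdx n' p',
                (if h' : ∀ j, β'.1 j ≤ α'.1 j then
                  a β β' * b ⟨α.1 - β.1, mdeg_sub α β h⟩ ⟨α'.1 - β'.1, mdeg_sub α' β' h'⟩
                else 0))
            else 0) := by
      intro α
      calc (∑ α' : MIdx n' (p'+q'), ∑ x : MIdx n p × MIdx n' p',
            (if h : (∀ i, x.1.1 i ≤ α.1 i) ∧ (∀ j, x.2.1 j ≤ α'.1 j) then
              a x.1 x.2 * b ⟨α.1 - x.1.1, mdeg_sub α x.1 h.1⟩ ⟨α'.1 - x.2.1, mdeg_sub α' x.2 h.2⟩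
            else 0))
          = ∑ α' : MIdx n' (p'+q'), ∑ β : MIdx n p, ∑ β' : MIdx n' p',
            (if h : (∀ i, β.1 i ≤ α.1 i) ∧ (∀ j, β'.1 j ≤ α'.1 j) then
              a β β' * b ⟨α.1 - β.1, mdeg_sub α β h.1⟩ ⟨α'.1 - β'.1, mdeg_sub α' β' h.2⟩
            else 0) := Finset.sum_congr rfl fun α' _ => by rw [Fintype.sum_prod_type]
        _ = ∑ β : MIdx n p, ∑ α' : MIdx n' (p'+q'), ∑ β' : MIdx n' p',
            (if h : (∀ i, β.1 i ≤ α.1 i) ∧ (∀ j, β'.1 j ≤ α'.1 j) then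
              a β β' * b ⟨α.1 - β.1, mdeg_sub α β h.1⟩ ⟨α'.1 - β'.1, mdeg_sub α' β' h.2⟩
            else 0) := Finset.sum_comm
        _ = _ := by
            refine Finset.sum_congr rfl fun β _ => ?_
            by_cases h : ∀ i, β.1 i ≤ α.1 i
            · rw [dif_pos h]
              refine Finset.sum_congr rfl fun α' _ => Finset.sum_congr rfl fun β' _ => ?_
              by_cases h' : ∀ j, β'.1 j ≤ α'.1 j
              · rw [dif_pos (⟨h, h'⟩ : (∀ i, β.1 i ≤ α.1 i) ∧ (∀ j, β'.1 j ≤ α'.1 j)), dif_pos h']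
              · rw [dif_neg (fun hc => h' hc.2), dif_neg h']
            · rw [dif_neg h]
              exact Finset.sum_eq_zero fun α' _ => Finset.sum_eq_zero fun β' _ =>
                dif_neg (fun hc => h hc.1)
    calc (∑ α : MIdx n (p+q), ∑ α' : MIdx n' (p'+q'),
          ∑ x : MIdx n p × MIdx n' p',
            (if h : (∀ i, x.1.1 i ≤ α.1 i) ∧ (∀ j, x.2.1 j ≤ α'.1 j) then
              a x.1 x.2 * b ⟨α.1 - x.1.1, mdeg_sub α x.1 h.1⟩ ⟨α'.1 - x.2.1, mdeg_sub α' x.2 h.2⟩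
            else 0))
        = ∑ α : MIdx n (p+q), ∑ β : MIdx n p,
            (if h : ∀ i, β.1 i ≤ α.1 i then
              (∑ α' : MIdx n' (p'+q'), ∑ β' : MIdx n' p',
                (if h' : ∀ j, β'.1 j ≤ α'.1 j then
                  a β β' * b ⟨α.1 - β.1, mdeg_sub α β h⟩ ⟨α'.1 - β'.1, mdeg_sub α' β' h'⟩
                else 0))
            else 0) := Finset.sum_congr rfl fun α _ => swap α
      _ = ∑ β : MIdx n p, ∑ γ : MIdx n q,
            ∑ α' : MIdx n' (p'+q'), ∑ β' : MIdx n' p',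
              (if h' : ∀ j, β'.1 j ≤ α'.1 j then
                a β β' * b γ ⟨α'.1 - β'.1, mdeg_sub α' β' h'⟩
              else 0) :=
          sum_split (fun β γ => ∑ α' : MIdx n' (p'+q'), ∑ β' : MIdx n' p',
            (if h' : ∀ j, β'.1 j ≤ α'.1 j then
              a β β' * b γ ⟨α'.1 - β'.1, mdeg_sub α' β' h'⟩
            else 0))
      _ = ∑ β : MIdx n p, ∑ γ : MIdx n q, ∑ β' : MIdx n' p', ∑ γ' : MIdx n' q', a β β' * b γ γ' :=
          Finset.sum_congr rfl fun β _ => Finset.sum_congr rfl fun γ _ =>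
            sum_split (fun β' γ' => a β β' * b γ γ')
      _ = ∑ β : MIdx n p, ∑ γ : MIdx n q,
            (∑ β' : MIdx n' p', a β β') * (∑ γ' : MIdx n' q', b γ γ') :=
          Finset.sum_congr rfl fun β _ => Finset.sum_congr rfl fun γ _ =>
            (Finset.sum_mul_sum _ _ _ _).symm
      _ = (∑ β : MIdx n p, ∑ β' : MIdx n' p', a β β') *
            (∑ γ : MIdx n q, ∑ γ' : MIdx n' q', b γ γ') :=
          (Finset.sum_mul_sum _ _ _ _).symm
  -- final assembly
  have hS0nn : 0 ≤ ∑ α : MIdx n (p+q), ∑ α' : MIdx n' (p'+q'),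
      ‖oprod A B α α'‖ ^ ρ / ((mfact α.1 : ℝ) * Dc) := by
    refine Finset.sum_nonneg fun α _ => Finset.sum_nonneg fun α' _ => ?_
    have : (0:ℝ) < Dc := by rw [hDsplit]; positivity
    have hMα : (0:ℝ) < (mfact α.1 : ℝ) := by exact_mod_cast mfact_pos α.1
    positivity
  have hSAnn : 0 ≤ ∑ β : MIdx n p, ∑ β' : MIdx n' p', a β β' :=
    Finset.sum_nonneg fun β _ => Finset.sum_nonneg fun β' _ => ha0 β β'
  have hSBnn : 0 ≤ ∑ γ : MIdx n q, ∑ γ' : MIdx n' q', b γ γ' :=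
    Finset.sum_nonneg fun γ _ => Finset.sum_nonneg fun γ' _ => hb0 γ γ'
  calc rnorm ρ (oprod A B)
      = (∑ α : MIdx n (p+q), ∑ α' : MIdx n' (p'+q'),
          ‖oprod A B α α'‖ ^ ρ / ((mfact α.1 : ℝ) * Dc)) ^ (1/ρ) := rfl
    _ ≤ ((∑ β : MIdx n p, ∑ β' : MIdx n' p', a β β') *
          (∑ γ : MIdx n q, ∑ γ' : MIdx n' q', b γ γ')) ^ (1/ρ) :=
        Real.rpow_le_rpow hS0nn key (by positivity)
    _ = (∑ β : MIdx n p, ∑ β' : MIdx n' p', a β β') ^ (1/ρ) *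
          (∑ γ : MIdx n q, ∑ γ' : MIdx n' q', b γ γ') ^ (1/ρ) :=
        Real.mul_rpow hSAnn hSBnn
    _ = rnorm ρ A * rnorm ρ B := rfl

end
end

section
/- Let 1 ≤ ρ < ∞ with conjugate exponent ϱ (1/ρ + 1/ϱ = 1; ϱ = ∞ when ρ = 1). Set r = limsup_{m→∞} ‖A(m)‖_ρ^{1/m} and R = 1/r (R = ∞ if r = 0). Then the power series Σ_{m≥0} x^{(m)}/m!·A(m) is absolutely convergent at every h ∈ F^n with ‖h‖_ϱ < R. -/
open scoped BigOperators ENNReal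

noncomputable section

lemma multinomial_term_le {n : ℕ} (y : Fin n → ℝ) (hy : ∀ i, 0 ≤ y i) (β : Fin n → ℕ) :
    ((mdeg β).factorial : ℝ) / (mfact β : ℝ) * ∏ i, y i ^ β i ≤ (∑ i, y i) ^ mdeg β := by
  have hb : (0:ℝ) < (mfact β : ℝ) := by exact_mod_cast mfact_pos β
  have hspec := Nat.multinomial_spec Finset.univ β
  have hcoef : ((mdeg β).factorial : ℝ) / (mfact β : ℝ)
      = (Nat.multinomial Finset.univ β : ℝ) := by
    rw [div_eq_iff hb.ne']
    have : (mdeg β).factorial = mfact β * Nat.multinomial Finset.univ β := by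
      rw [mfact, hspec]; rfl
    rw [this]; push_cast; ring
  rw [hcoef]
  have hmem : β ∈ Finset.piAntidiag Finset.univ (mdeg β) := by
    simp [Finset.mem_piAntidiag, mdeg]
  rw [Finset.sum_pow_eq_sum_piAntidiag Finset.univ y (mdeg β)]
  exact Finset.single_le_sum (f := fun k => (Nat.multinomial Finset.univ k : ℝ) * ∏ i, y i ^ k i)
    (fun k _ => mul_nonneg (Nat.cast_nonneg _)
      (Finset.prod_nonneg fun i _ => pow_nonneg (hy i) _)) hmem

lemma norm_prod_pow_le_sup {n m : ℕ} (hn : 0 < n) {F : Type*} [RCLike F] (h : Fin n → F)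
    (β : Fin n → ℕ) (hβ : mdeg β = m) :
    ‖∏ i, h i ^ β i‖ ≤ (⨆ i, ‖h i‖) ^ m := by
  have hbdd : BddAbove (Set.range fun i => ‖h i‖) := (Set.finite_range _).bddAbove
  have hle : ∀ i, ‖h i‖ ≤ ⨆ i, ‖h i‖ := fun i => le_ciSup hbdd i
  calc ‖∏ i, h i ^ β i‖ = ∏ i, ‖h i‖ ^ β i := by simp [norm_prod, norm_pow]
    _ ≤ ∏ i, (⨆ j, ‖h j‖) ^ β i :=
        Finset.prod_le_prod (fun i _ => pow_nonneg (norm_nonneg _) _)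
          (fun i _ => pow_le_pow_left₀ (norm_nonneg _) (hle i) _)
    _ = (⨆ j, ‖h j‖) ^ m := by rw [Finset.prod_pow_eq_pow_sum]; rw [← hβ]; rfl

lemma norm_prod_pow_mul_le {n m : ℕ} {F : Type*} [RCLike F] (h : Fin n → F) (q : ℝ)
    (hq : 0 < q) (β : Fin n → ℕ) (hβ : mdeg β = m) :
    ‖∏ i, h i ^ β i‖ * ((m.factorial : ℝ) / (mfact β : ℝ)) ^ (1/q) ≤
      ((∑ i, ‖h i‖ ^ q) ^ (1/q)) ^ m := by
  subst hβ
  have hb : (0:ℝ) < (mfact β : ℝ) := by exact_mod_cast mfact_pos β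
  have hcoef0 : (0:ℝ) ≤ ((mdeg β).factorial : ℝ) / (mfact β : ℝ) := by positivity
  have hSig : (0:ℝ) ≤ ∑ i, ‖h i‖ ^ q :=
    Finset.sum_nonneg fun i _ => Real.rpow_nonneg (norm_nonneg _) _
  have key := multinomial_term_le (fun i => ‖h i‖ ^ q)
    (fun i => Real.rpow_nonneg (norm_nonneg _) q) β
  have hprod0 : (0:ℝ) ≤ ∏ i, (‖h i‖ ^ q) ^ β i :=
    Finset.prod_nonneg fun i _ => pow_nonneg (Real.rpow_nonneg (norm_nonneg _) _) _
  have key2 := Real.rpow_le_rpow (mul_nonneg hcoef0 hprod0) key (by positivity : (0:ℝ) ≤ 1/q)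
  -- rewrite LHS of key2
  have e1 : ∏ i, (‖h i‖ ^ q) ^ β i = (∏ i, ‖h i‖ ^ β i) ^ q := by
    rw [← Real.finset_prod_rpow _ _ (fun i _ => pow_nonneg (norm_nonneg _) _) q]
    refine Finset.prod_congr rfl fun i _ => ?_
    rw [← Real.rpow_natCast (‖h i‖ ^ q) (β i), ← Real.rpow_mul (norm_nonneg _),
        ← Real.rpow_natCast (‖h i‖) (β i), ← Real.rpow_mul (norm_nonneg _), mul_comm]
  have e2 : ((((mdeg β).factorial : ℝ) / (mfact β : ℝ)) * (∏ i, ‖h i‖ ^ β i) ^ q) ^ (1/q)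
      = (((mdeg β).factorial : ℝ) / (mfact β : ℝ)) ^ (1/q) * ∏ i, ‖h i‖ ^ β i := by
    rw [Real.mul_rpow hcoef0 (Real.rpow_nonneg (Finset.prod_nonneg fun i _ =>
      pow_nonneg (norm_nonneg _) _) _), ← Real.rpow_mul (Finset.prod_nonneg fun i _ =>
      pow_nonneg (norm_nonneg _) _), mul_one_div, div_self hq.ne', Real.rpow_one]
  have e3 : ((∑ i, ‖h i‖ ^ q) ^ (mdeg β)) ^ (1/q) = ((∑ i, ‖h i‖ ^ q) ^ (1/q)) ^ (mdeg β) := by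
    rw [← Real.rpow_natCast (∑ i, ‖h i‖ ^ q) (mdeg β), ← Real.rpow_mul hSig,
        ← Real.rpow_natCast ((∑ i, ‖h i‖ ^ q) ^ (1/q)) (mdeg β), ← Real.rpow_mul hSig, mul_comm]
  rw [e1, e2, e3] at key2
  calc ‖∏ i, h i ^ β i‖ * (((mdeg β).factorial : ℝ) / (mfact β : ℝ)) ^ (1/q)
      = (((mdeg β).factorial : ℝ) / (mfact β : ℝ)) ^ (1/q) * ∏ i, ‖h i‖ ^ β i := by
        rw [norm_prod]; simp [norm_pow, mul_comm]
    _ ≤ _ := key2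

lemma rnorm_nonneg {n n' p p' : ℕ} {F : Type*} [RCLike F] (ρ : ℝ) (A : MMat n n' p p' F) :
    0 ≤ rnorm ρ A := Real.rpow_nonneg (Finset.sum_nonneg fun a _ => Finset.sum_nonneg fun a' _ =>
      div_nonneg (Real.rpow_nonneg (norm_nonneg _) _) (by positivity)) _

lemma entry_le {n n' p q' : ℕ} {F : Type*} [RCLike F] {ρ : ℝ} (hρ : 1 ≤ ρ)
    (A : MMat n n' p q' F) (α : MIdx n p) (α' : MIdx n' q') :
    ‖A α α'‖ ≤ rnorm ρ A *
      ((mfact α.1 : ℝ) * ((p.factorial * q'.factorial : ℕ) : ℝ) ^ (ρ - 1)) ^ (1/ρ) := by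
  have hρ0 : (0:ℝ) < ρ := one_pos.trans_le hρ
  set d : ℝ := (mfact α.1 : ℝ) * ((p.factorial * q'.factorial : ℕ) : ℝ) ^ (ρ - 1) with hd
  have hdpos : 0 < d := by
    apply mul_pos
    · exact_mod_cast mfact_pos _
    · apply Real.rpow_pos_of_pos
      have := Nat.mul_pos p.factorial_pos q'.factorial_pos
      exact_mod_cast this
  set T : ℝ := ∑ a : MIdx n p, ∑ a' : MIdx n' q', ‖A a a'‖ ^ ρ /
      ((mfact a.1 : ℝ) * ((p.factorial * q'.factorial : ℕ) : ℝ) ^ (ρ - 1)) with hT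
  have htermpos : ∀ (a : MIdx n p) (a' : MIdx n' q'), 0 ≤ ‖A a a'‖ ^ ρ /
      ((mfact a.1 : ℝ) * ((p.factorial * q'.factorial : ℕ) : ℝ) ^ (ρ - 1)) := by
    intro a a'
    apply div_nonneg (Real.rpow_nonneg (norm_nonneg _) _)
    have : (0:ℕ) < mfact a.1 := mfact_pos _
    positivity
  have hle : ‖A α α'‖ ^ ρ / d ≤ T := by
    calc ‖A α α'‖ ^ ρ / d ≤ ∑ a' : MIdx n' q', ‖A α a'‖ ^ ρ /
        ((mfact α.1 : ℝ) * ((p.factorial * q'.factorial : ℕ) : ℝ) ^ (ρ - 1)) :=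
          Finset.single_le_sum (fun a' _ => htermpos α a') (Finset.mem_univ α')
      _ ≤ T := Finset.single_le_sum
          (f := fun a => ∑ a' : MIdx n' q', ‖A a a'‖ ^ ρ /
            ((mfact a.1 : ℝ) * ((p.factorial * q'.factorial : ℕ) : ℝ) ^ (ρ - 1)))
          (fun a _ => Finset.sum_nonneg fun a' _ => htermpos a a') (Finset.mem_univ α)
  have hT0 : 0 ≤ T := Finset.sum_nonneg fun a _ => Finset.sum_nonneg fun a' _ => htermpos a a'
  have h2 : ‖A α α'‖ ^ ρ ≤ T * d := (div_le_iff₀ hdpos).1 hle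
  calc ‖A α α'‖ = (‖A α α'‖ ^ ρ) ^ (1/ρ) := by
        rw [one_div, Real.rpow_rpow_inv (norm_nonneg _) hρ0.ne']
    _ ≤ (T * d) ^ (1/ρ) := Real.rpow_le_rpow (Real.rpow_nonneg (norm_nonneg _) _) h2 (by positivity)
    _ = T ^ (1/ρ) * d ^ (1/ρ) := Real.mul_rpow hT0 hdpos.le
    _ = rnorm ρ A * d ^ (1/ρ) := rfl

lemma rpow_algebra {bf mf qf x ρ : ℝ} (hb : 0 < bf) (hm : 0 < mf) (hq : 0 < qf)
    (hρ : 1 ≤ ρ) :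
    x / bf * (bf * (mf * qf) ^ (ρ-1)) ^ (1/ρ) = qf ^ (1-1/ρ) * (x * (mf / bf) ^ (1-1/ρ)) := by
  have hρ0 : (0:ℝ) < ρ := by linarith
  have e1 : (bf * (mf*qf) ^ (ρ-1)) ^ (1/ρ) = bf ^ (1/ρ) * (mf ^ (1-1/ρ) * qf ^ (1-1/ρ)) := by
    rw [Real.mul_rpow hb.le (Real.rpow_nonneg (by positivity) _),
        Real.mul_rpow hm.le hq.le,
        Real.mul_rpow (Real.rpow_nonneg hm.le _) (Real.rpow_nonneg hq.le _),
        ← Real.rpow_mul hm.le, ← Real.rpow_mul hq.le]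
    have : (ρ-1)*(1/ρ) = 1-1/ρ := by field_simp
    rw [this]
  rw [e1]
  have e2 : bf ^ (1/ρ) = bf / bf ^ (1-1/ρ) := by
    rw [eq_div_iff (Real.rpow_pos_of_pos hb _).ne', ← Real.rpow_add hb]
    have : 1/ρ + (1-1/ρ) = 1 := by ring
    rw [this, Real.rpow_one]
  have e3 : (mf/bf) ^ (1-1/ρ) = mf ^ (1-1/ρ) / bf ^ (1-1/ρ) := Real.div_rpow hm.le hb.le _
  rw [e2, e3]
  have hbs : (0:ℝ) < bf ^ (1-1/ρ) := Real.rpow_pos_of_pos hb _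
  field_simp

lemma MIdx_apply_le {n m : ℕ} (β : MIdx n m) (i : Fin n) : β.1 i ≤ m := by
  have h := Finset.single_le_sum (f := β.1) (fun j _ => Nat.zero_le _) (Finset.mem_univ i)
  exact le_trans h (le_of_eq β.2)

lemma card_MIdx_le (n m : ℕ) : (Fintype.card (MIdx n m) : ℝ) ≤ ((m:ℝ)+1) ^ n := by
  have h1 : Fintype.card (MIdx n m) ≤ Fintype.card (Fin n → Fin (m+1)) := by
    apply Fintype.card_le_of_injective
      (fun β => fun i => (⟨β.1 i, Nat.lt_succ_of_le (MIdx_apply_le β i)⟩ : Fin (m+1)))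
    intro β γ hβγ
    apply Subtype.ext
    funext i
    have := congrFun hβγ i
    simpa using this
  have h2 : Fintype.card (Fin n → Fin (m+1)) = (m+1) ^ n := by
    simp [Fintype.card_fun]
  calc (Fintype.card (MIdx n m) : ℝ) ≤ ((m+1 : ℕ) ^ n : ℕ) := by exact_mod_cast h1.trans_eq h2
    _ = ((m:ℝ)+1) ^ n := by push_cast; ring

set_option maxHeartbeats 1600000 in
/-- For `1 ≤ ρ < ∞` with conjugate exponent `ϱ` (computed in `ℝ≥0∞`, so `ϱ = ∞`
when `ρ = 1`), with `r = limsup_m ‖A(m)‖_ρ^{1/m}` and `R = 1/r`, the power series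
`Σ_m x^{(m)}/m!·A(m)` is absolutely convergent at every `h ∈ F^n` with `‖h‖_ϱ < R`. -/
theorem absConv_of_lt_radius {n n' q' : ℕ} {F : Type*} [RCLike F] (hn : 0 < n) (hn' : 0 < n')
    (ρ : ℝ) (hρ : 1 ≤ ρ) (ϱ : ℝ≥0∞) (hconj : 1 / ENNReal.ofReal ρ + 1 / ϱ = 1)
    (A : (m : ℕ) → MMat n n' m q' F) (h : Fin n → F)
    (hlt : ENNReal.ofReal (vnormE ϱ h) < 1 / convRadiusInv ρ A) :
    AbsConvAt A h := by
  intro α'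
  have hρ0 : (0:ℝ) < ρ := one_pos.trans_le hρ
  set s : ℝ := 1 - 1/ρ with hs
  have hs0 : 0 ≤ s := by
    rw [hs]
    have h2 : 1/ρ ≤ 1 := by rw [div_le_one hρ0]; exact hρ
    linarith
  set v : ℝ := vnormE ϱ h with hv
  have hqf0 : (0:ℝ) < (q'.factorial : ℝ) := by exact_mod_cast q'.factorial_pos
  -- per-degree key estimate on the h-part
  have claim : ∀ (m : ℕ) (β : MIdx n m),
      ‖∏ i, h i ^ β.1 i‖ * ((m.factorial : ℝ) / (mfact β.1 : ℝ)) ^ s ≤ v ^ m := by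
    rcases eq_or_lt_of_le hρ with h1 | h1
    · have hϱ : ϱ = ∞ := by
        rw [← h1] at hconj
        simp only [ENNReal.ofReal_one, one_div, inv_one] at hconj
        have h2 : (1:ℝ≥0∞) + ϱ⁻¹ = 1 + 0 := by simpa using hconj
        have h3 := (ENNReal.add_right_inj (by simp)).mp h2
        exact ENNReal.inv_eq_zero.mp h3
      intro m β
      have hseq : s = 0 := by rw [hs, ← h1]; norm_num
      rw [hseq, Real.rpow_zero, mul_one, hv, vnormE, if_pos hϱ]
      exact norm_prod_pow_le_sup hn h β.1 β.2
    · have hsspos : 0 < s := by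
        rw [hs]
        have h2 : 1/ρ < 1 := by rw [div_lt_one hρ0]; exact h1
        linarith
      have hinv : 1/ϱ = ENNReal.ofReal s := by
        have h2 : 1/ϱ + 1/ENNReal.ofReal ρ = 1 := by rw [add_comm]; exact hconj
        have hfin : 1/ENNReal.ofReal ρ ≠ ∞ := by
          rw [one_div]
          exact ENNReal.inv_ne_top.mpr (ENNReal.ofReal_pos.mpr hρ0).ne'
        have h3 : 1/ϱ = 1 - 1/ENNReal.ofReal ρ := ENNReal.eq_sub_of_add_eq hfin h2
        rw [h3, one_div, ← ENNReal.ofReal_inv_of_pos hρ0, ← ENNReal.ofReal_one,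
          ← ENNReal.ofReal_sub _ (by positivity : (0:ℝ) ≤ ρ⁻¹), hs, one_div]
      have hϱtop : ϱ ≠ ∞ := by
        intro htop
        rw [htop, one_div, ENNReal.inv_top] at hinv
        have h4 : s ≤ 0 := ENNReal.ofReal_eq_zero.mp hinv.symm
        linarith
      have hϱne0 : ϱ ≠ 0 := by
        intro h0
        rw [h0, one_div, ENNReal.inv_zero] at hinv
        exact ENNReal.ofReal_ne_top hinv.symm
      have hq : ϱ.toReal⁻¹ = s := by
        have h4 : (ϱ⁻¹).toReal = s := by
          rw [← one_div, hinv, ENNReal.toReal_ofReal hs0]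
        rwa [ENNReal.toReal_inv] at h4
      have hqpos : 0 < ϱ.toReal := ENNReal.toReal_pos hϱne0 hϱtop
      intro m β
      rw [hv, vnormE, if_neg hϱtop]
      have h5 := norm_prod_pow_mul_le h ϱ.toReal hqpos β.1 β.2
      simpa only [one_div, hq] using h5
  have hv0 : 0 ≤ v := by
    have i0 : Fin n := ⟨0, hn⟩
    rw [hv, vnormE]
    split
    · exact le_trans (norm_nonneg (h i0)) (le_ciSup (f := fun i => ‖h i‖) ((Set.finite_range _).bddAbove) i0)
    · positivity
  -- per-entry bound for the full term
  have tbound : ∀ (m : ℕ) (β : MIdx n m),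
      ‖(∏ i, h i ^ β.1 i) / (mfact β.1 : F) * A m β α'‖
        ≤ rnorm ρ (A m) * ((q'.factorial : ℝ) ^ s * v ^ m) := by
    intro m β
    have hb : (0:ℝ) < (mfact β.1 : ℝ) := by exact_mod_cast mfact_pos _
    have hm : (0:ℝ) < (m.factorial : ℝ) := by exact_mod_cast m.factorial_pos
    have hnorm : ‖(∏ i, h i ^ β.1 i) / (mfact β.1 : F) * A m β α'‖
        = ‖∏ i, h i ^ β.1 i‖ / (mfact β.1 : ℝ) * ‖A m β α'‖ := by
      rw [norm_mul, norm_div, RCLike.norm_natCast]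
    have hcast : ((m.factorial * q'.factorial : ℕ) : ℝ)
        = (m.factorial : ℝ) * (q'.factorial : ℝ) := by push_cast; ring
    rw [hnorm]
    calc ‖∏ i, h i ^ β.1 i‖ / (mfact β.1 : ℝ) * ‖A m β α'‖
        ≤ ‖∏ i, h i ^ β.1 i‖ / (mfact β.1 : ℝ) *
          (rnorm ρ (A m) *
            ((mfact β.1 : ℝ) * ((m.factorial * q'.factorial : ℕ) : ℝ) ^ (ρ-1)) ^ (1/ρ)) :=
          mul_le_mul_of_nonneg_left (entry_le hρ (A m) β α') (by positivity)
      _ = rnorm ρ (A m) * ((q'.factorial : ℝ) ^ s *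
            (‖∏ i, h i ^ β.1 i‖ * ((m.factorial : ℝ)/(mfact β.1 : ℝ)) ^ s)) := by
          rw [hcast]
          have halg := rpow_algebra (x := ‖∏ i, h i ^ β.1 i‖) hb hm hqf0 hρ
          rw [hs, ← halg]
          ring
      _ ≤ rnorm ρ (A m) * ((q'.factorial : ℝ) ^ s * v ^ m) := by
          have hcl := claim m β
          exact mul_le_mul_of_nonneg_left
            (mul_le_mul_of_nonneg_left hcl (Real.rpow_nonneg hqf0.le _))
            (rnorm_nonneg ρ (A m))
  -- reduce to a sum over degrees
  let e : (Σ m : ℕ, MIdx n m) ≃ (Fin n → ℕ) :=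
    { toFun := fun x => x.2.1
      invFun := fun α => ⟨mdeg α, α, rfl⟩
      left_inv := by rintro ⟨m, β, rfl⟩; rfl
      right_inv := fun α => rfl }
  rw [← e.summable_iff]
  have hnonneg : ∀ x : Σ m : ℕ, MIdx n m,
      0 ≤ ((fun α : Fin n → ℕ =>
        ‖(∏ i, h i ^ α i) / (mfact α : F) * A (mdeg α) ⟨α, rfl⟩ α'‖) ∘ e) x :=
    fun _ => norm_nonneg _
  rw [summable_sigma_of_nonneg hnonneg]
  refine ⟨fun m => Summable.of_finite, ?_⟩
  set S : ℕ → ℝ :=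
    fun m => ∑ β : MIdx n m, ‖(∏ i, h i ^ β.1 i) / (mfact β.1 : F) * A m β α'‖ with hS
  have hfe : ∀ (m : ℕ) (β : MIdx n m),
      ((fun α : Fin n → ℕ =>
        ‖(∏ i, h i ^ α i) / (mfact α : F) * A (mdeg α) ⟨α, rfl⟩ α'‖) ∘ e) ⟨m, β⟩
      = ‖(∏ i, h i ^ β.1 i) / (mfact β.1 : F) * A m β α'‖ := by
    rintro m ⟨b, rfl⟩; rfl
  have hkey : (fun m => ∑' β : MIdx n m,
      ((fun α : Fin n → ℕ =>
        ‖(∏ i, h i ^ α i) / (mfact α : F) * A (mdeg α) ⟨α, rfl⟩ α'‖) ∘ e) ⟨m, β⟩) = S := by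
    funext m
    rw [tsum_fintype]
    exact Finset.sum_congr rfl fun β _ => hfe m β
  rw [hkey]
  -- root test
  obtain ⟨c0, hc1, hc2⟩ := exists_between hlt
  set c := min c0 (ENNReal.ofReal v + 1) with hcdef
  have hcv : ENNReal.ofReal v < c :=
    lt_min hc1 (ENNReal.lt_add_right ENNReal.ofReal_ne_top one_ne_zero)
  have hcr : c < 1 / convRadiusInv ρ A := lt_of_le_of_lt (min_le_left _ _) hc2
  have hcne : c ≠ ∞ :=
    ne_top_of_le_ne_top (ENNReal.add_ne_top.mpr ⟨ENNReal.ofReal_ne_top, ENNReal.one_ne_top⟩)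
      (min_le_right _ _)
  have hc0 : c ≠ 0 := (zero_le.trans_lt hcv).ne'
  set w := c.toReal with hwdef
  have hw0 : 0 < w := ENNReal.toReal_pos hc0 hcne
  have hcw : c = ENNReal.ofReal w := (ENNReal.ofReal_toReal hcne).symm
  have hvw : v < w := by
    rw [hcw] at hcv
    exact (ENNReal.ofReal_lt_ofReal_iff hw0).mp hcv
  have hr : convRadiusInv ρ A < c⁻¹ := by
    rw [one_div] at hcr
    exact ENNReal.lt_inv_iff_lt_inv.mp hcr
  have hev : ∀ᶠ m in Filter.atTop,
      (ENNReal.ofReal (rnorm ρ (A m))) ^ (1/(m:ℝ)) < c⁻¹ :=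
    Filter.eventually_lt_of_limsup_lt hr
  obtain ⟨M, hM⟩ := Filter.eventually_atTop.mp hev
  have hbound : ∀ m, max M 1 ≤ m → rnorm ρ (A m) ≤ w⁻¹ ^ m := by
    intro m hm
    have hm1 : (1:ℕ) ≤ m := le_trans (le_max_right _ _) hm
    have hmne : (m:ℝ) ≠ 0 := Nat.cast_ne_zero.mpr (by omega)
    have h2 : (ENNReal.ofReal (rnorm ρ (A m))) ^ (1/(m:ℝ)) ≤ c⁻¹ :=
      (hM m (le_trans (le_max_left _ _) hm)).le
    have h3 : ENNReal.ofReal (rnorm ρ (A m)) ≤ c⁻¹ ^ m := by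
      have h4 := pow_le_pow_left' h2 m
      rwa [← ENNReal.rpow_natCast ((ENNReal.ofReal (rnorm ρ (A m))) ^ (1/(m:ℝ))) m,
        ← ENNReal.rpow_mul, one_div, inv_mul_cancel₀ hmne, ENNReal.rpow_one] at h4
    rw [hcw, ← ENNReal.ofReal_inv_of_pos hw0, ← ENNReal.ofReal_pow (by positivity)] at h3
    exact (ENNReal.ofReal_le_ofReal_iff (by positivity)).mp h3
  set r' : ℝ := max (v/w) 2⁻¹ with hr'def
  have hr'0 : 0 < r' := lt_max_of_lt_right (by norm_num)
  have hr'1 : r' < 1 := max_lt (by rw [div_lt_one hw0]; exact hvw) (by norm_num)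
  have hvwr : v/w ≤ r' := le_max_left _ _
  have hg : Summable (fun m : ℕ => ((m:ℝ)+1) ^ n * r' ^ m) := by
    have h0 : Summable (fun m : ℕ => (m:ℝ) ^ n * r' ^ m) :=
      summable_pow_mul_geometric_of_norm_lt_one n
        (by rw [Real.norm_eq_abs, abs_of_pos hr'0]; exact hr'1)
    have h1 := (summable_nat_add_iff (f := fun m : ℕ => (m:ℝ) ^ n * r' ^ m) 1).mpr h0
    have h2 := h1.mul_left r'⁻¹
    refine h2.congr fun m => ?_
    show r'⁻¹ * (((m+1:ℕ):ℝ) ^ n * r' ^ (m+1)) = ((m:ℝ)+1) ^ n * r' ^ m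
    push_cast
    rw [pow_succ]
    field_simp
  apply summable_of_isBigO_nat hg
  apply Asymptotics.IsBigO.of_bound ((q'.factorial : ℝ) ^ s)
  rw [Filter.eventually_atTop]
  refine ⟨max M 1, fun m hm => ?_⟩
  have hS0 : 0 ≤ S m := Finset.sum_nonneg fun β _ => norm_nonneg _
  have hg0 : 0 ≤ ((m:ℝ)+1) ^ n * r' ^ m := by positivity
  rw [Real.norm_of_nonneg hS0, Real.norm_of_nonneg hg0]
  have h1 : S m ≤ (Fintype.card (MIdx n m) : ℝ) *
      (rnorm ρ (A m) * ((q'.factorial : ℝ) ^ s * v ^ m)) := by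
    rw [hS]
    have h2 := Finset.sum_le_card_nsmul Finset.univ _ _ (fun β _ => tbound m β)
    simpa [nsmul_eq_mul, Finset.card_univ] using h2
  have h2 : rnorm ρ (A m) * v ^ m ≤ r' ^ m := by
    calc rnorm ρ (A m) * v ^ m ≤ w⁻¹ ^ m * v ^ m :=
          mul_le_mul_of_nonneg_right (hbound m hm) (pow_nonneg hv0 m)
      _ = (v/w) ^ m := by rw [div_pow, inv_pow, div_eq_mul_inv]; ring
      _ ≤ r' ^ m := pow_le_pow_left₀ (by positivity) hvwr m
  calc S m ≤ (Fintype.card (MIdx n m) : ℝ) *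
        (rnorm ρ (A m) * ((q'.factorial : ℝ) ^ s * v ^ m)) := h1
    _ = (Fintype.card (MIdx n m) : ℝ) *
        ((q'.factorial : ℝ) ^ s * (rnorm ρ (A m) * v ^ m)) := by ring
    _ ≤ ((m:ℝ)+1) ^ n * ((q'.factorial : ℝ) ^ s * r' ^ m) := by
        apply mul_le_mul (card_MIdx_le n m)
          (mul_le_mul_of_nonneg_left h2 (Real.rpow_nonneg hqf0.le _))
          (mul_nonneg (Real.rpow_nonneg hqf0.le _)
            (mul_nonneg (rnorm_nonneg ρ (A m)) (pow_nonneg hv0 m)))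
          (by positivity)
    _ = (q'.factorial : ℝ) ^ s * (((m:ℝ)+1) ^ n * r' ^ m) := by ring


end
end
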